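/- If a binary relation ⪰ on a set C of Savage acts is complete (for all a, b ∈ C, a ⪰ b or b ⪰ a), then ⪰ satisfies extended statewise cancellation if and only if ⪰ satisfies statewise cancellation. -/
import Mathlib


/-- Statewise cancellation for a relation on a set of Savage acts. -/
def StatewiseCancel {S O : Type*} (C : Set (S → O)) (R : (S → O) → (S → O) → Prop) : Prop :=
  ∀ (n : ℕ) (a b : Fin (n + 1) → S → O),
    (∀ i, a i ∈ C) → (∀ i, b i ∈ C) →
    (∀ s : S, ((List.ofFn fun i => a i s : List O) : Multiset O)
            = ((List.ofFn fun i => b i s : List O) : Multiset O)) →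
    (∀ i : Fin (n + 1), (i : ℕ) < n → R (a i) (b i)) →
    R (b (Fin.last n)) (a (Fin.last n))

/-- Extended statewise cancellation for a relation on a set of Savage acts. -/
def ExtStatewiseCancel {S O : Type*} (C : Set (S → O)) (R : (S → O) → (S → O) → Prop) : Prop :=
  ∀ (n : ℕ) (a b : Fin (n + 1) → S → O),
    (∀ i, a i ∈ C) → (∀ i, b i ∈ C) →
    (∀ s : S, ((List.ofFn fun i => a i s : List O) : Multiset O)
            = ((List.ofFn fun i => b i s : List O) : Multiset O)) →
    (∃ k, k ≤ n ∧ (∀ i : Fin (n + 1), (i : ℕ) < k → R (a i) (b i)) ∧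
      (∀ i : Fin (n + 1), k ≤ (i : ℕ) → a i = a (Fin.last n) ∧ b i = b (Fin.last n))) →
    R (b (Fin.last n)) (a (Fin.last n))

/-- For a complete relation, extended statewise cancellation is equivalent to
statewise cancellation. -/
theorem extStatewiseCancel_iff_statewiseCancel_of_complete
    {S O : Type*} [Fintype S] [Fintype O] [Nonempty S] [Nonempty O]
    (C : Set (S → O)) (R : (S → O) → (S → O) → Prop)
    (hcomp : ∀ a ∈ C, ∀ b ∈ C, R a b ∨ R b a) :
    ExtStatewiseCancel C R ↔ StatewiseCancel C R := by
  constructor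
  · intro hext n a b ha hb hmult hR
    apply hext n a b ha hb hmult
    refine ⟨n, le_refl n, hR, fun i hi => ?_⟩
    have : i = Fin.last n := by
      have := i.isLt; apply Fin.ext; simp [Fin.last]; omega
    subst this; exact ⟨rfl, rfl⟩
  · rintro hsw n a b ha hb hmult ⟨k, hk, hRk, heq⟩
    rcases hcomp (b (Fin.last n)) (hb _) (a (Fin.last n)) (ha _) with h | h
    · exact h
    · apply hsw n a b ha hb hmult
      intro i hi
      by_cases hik : (i : ℕ) < k
      · exact hRk i hik
      · obtain ⟨h1, h2⟩ := heq i (le_of_not_gt hik)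
        rw [h1, h2]; exact h
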